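/- Let M be a linear subspace of L^∞(Ω,F) with 1 ∈ M and E : M → ℝ a convex pre-expectation. Then for every X ∈ M, E(X) = max over continuous linear functionals μ on M of (μX − E*(μ)), and the maximum is attained on the weak* compact convex set {μ ∈ M' : E*(μ) ≤ α} for any α ≥ ‖X‖_∞ − E(X). -/

import Mathlib

open Set

def IsLinfty {Ω : Type*} [MeasurableSpace Ω] (X : Ω → ℝ) : Prop :=
  Measurable X ∧ ∃ C : ℝ, ∀ ω, |X ω| ≤ C

/-- A bounded (= continuous) linear functional on `M` w.r.t. the sup norm,
i.e. an element of `M'`. -/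
def IsBddFunctional {Ω : Type*} (M : Submodule ℝ (Ω → ℝ)) (μ : M →ₗ[ℝ] ℝ) : Prop :=
  ∃ C : ℝ, ∀ X : M, |μ X| ≤ C * ⨆ ω, |(X : Ω → ℝ) ω|

/-- The convex conjugate `E*(μ) = sup_{X ∈ M} (μX − E(X))`, with values in `EReal`. -/
noncomputable def conjE {Ω : Type*} (M : Submodule ℝ (Ω → ℝ))
    (E : (Ω → ℝ) → ℝ) (μ : M →ₗ[ℝ] ℝ) : EReal :=
  ⨆ X : M, ((μ X - E (X : Ω → ℝ) : ℝ) : EReal)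

private lemma aux_limit (a b d : ℝ) (h : ∀ t : ℝ, 0 < t → t ≤ 1 → a ≤ b + t * d) : a ≤ b := by
  by_contra h'
  push_neg at h'
  have hd : 0 < d := by nlinarith [h 1 one_pos le_rfl]
  have ht0 : 0 < min 1 ((a - b) / (2 * d)) :=
    lt_min one_pos (div_pos (by linarith) (by linarith))
  have := h _ ht0 (min_le_left _ _)
  have h2 : min 1 ((a - b) / (2 * d)) * d ≤ (a - b) / (2 * d) * d :=
    mul_le_mul_of_nonneg_right (min_le_right _ _) hd.le
  have h3 : (a - b) / (2 * d) * d = (a - b) / 2 := by field_simp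
  linarith

private lemma exists_subgrad {V : Type*} [AddCommGroup V] [Module ℝ V] (φ : V → ℝ)
    (hφ0 : φ 0 = 0)
    (hconv : ∀ Z W : V, ∀ t ∈ Icc (0:ℝ) 1, φ (t • Z + (1-t) • W) ≤ t * φ Z + (1-t) * φ W) :
    ∃ g : V →ₗ[ℝ] ℝ, ∀ Z, g Z ≤ φ Z := by
  classical
  set q : V → ℝ → ℝ := fun Z t => φ (t • Z) / t with hqdef
  have hq1 : ∀ Z : V, q Z 1 = φ Z := by intro Z; simp [hqdef]
  -- monotonicity of difference quotients
  have qmono : ∀ (Z : V) (s t : ℝ), 0 < s → s ≤ t → q Z s ≤ q Z t := by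
    intro Z s t hs hst
    have ht : 0 < t := lt_of_lt_of_le hs hst
    have hmem : s / t ∈ Icc (0:ℝ) 1 := ⟨by positivity, by rw [div_le_one ht]; exact hst⟩
    have h1 := hconv (t • Z) 0 (s / t) hmem
    have h2 : (s / t) • t • Z + (1 - s / t) • (0 : V) = s • Z := by
      rw [smul_zero, add_zero, smul_smul, div_mul_cancel₀ _ ht.ne']
    rw [h2, hφ0, mul_zero, add_zero] at h1
    rw [hqdef]
    rw [div_le_div_iff₀ hs ht]
    calc φ (s • Z) * t ≤ (s / t * φ (t • Z)) * t := by nlinarith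
      _ = φ (t • Z) * s := by field_simp
  -- midpoint bound
  have qmid : ∀ W : V, -φ (-W) ≤ φ W := by
    intro W
    have h1 := hconv W (-W) (1/2) (by norm_num)
    have h2 : (1/2 : ℝ) • W + (1 - 1/2 : ℝ) • (-W) = 0 := by norm_num
    rw [h2, hφ0] at h1
    linarith
  have qlb : ∀ (Z : V) (t : ℝ), 0 < t → -φ (-Z) ≤ q Z t := by
    intro Z t ht
    have hneg : -q (-Z) t ≤ q Z t := by
      have hm := qmid (t • Z)
      rw [← smul_neg] at hm
      simp only [hqdef]
      rw [← neg_div]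
      gcongr
    rcases le_total t 1 with h1 | h1
    · have hmon := qmono (-Z) t 1 ht h1
      rw [hq1] at hmon
      linarith
    · have hmon := qmono Z 1 t one_pos h1
      rw [hq1] at hmon
      linarith [qmid Z]
  set N : V → ℝ := fun Z => ⨅ t : Ioi (0:ℝ), q Z (t : ℝ) with hNdef
  have hbdd : ∀ Z : V, BddBelow (Set.range fun t : Ioi (0:ℝ) => q Z (t : ℝ)) := by
    intro Z
    refine ⟨-φ (-Z), ?_⟩
    rintro x ⟨t, rfl⟩
    exact qlb Z t t.2
  have hNle : ∀ (Z : V) (t : ℝ), 0 < t → N Z ≤ q Z t := by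
    intro Z t ht
    exact ciInf_le (hbdd Z) (⟨t, ht⟩ : Ioi (0:ℝ))
  have hleN : ∀ (Z : V) (a : ℝ), (∀ t : ℝ, 0 < t → a ≤ q Z t) → a ≤ N Z := by
    intro Z a h
    exact le_ciInf fun t => h t t.2
  -- positive homogeneity
  have Nkey : ∀ c : ℝ, 0 < c → ∀ Z, N (c • Z) ≤ c * N Z := by
    intro c hc Z
    rw [← div_le_iff₀' hc]
    refine hleN Z _ ?_
    intro t ht
    rw [div_le_iff₀' hc]
    have heq : c * q Z t = q (c • Z) (t / c) := by
      simp only [hqdef]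
      rw [smul_smul, div_mul_cancel₀ _ hc.ne']
      rw [div_div_eq_mul_div]
      ring
    rw [heq]
    exact hNle (c • Z) (t / c) (by positivity)
  have N_hom : ∀ c : ℝ, 0 < c → ∀ Z, N (c • Z) = c * N Z := by
    intro c hc Z
    refine le_antisymm (Nkey c hc Z) ?_
    have h2 := Nkey c⁻¹ (by positivity) (c • Z)
    rw [inv_smul_smul₀ hc.ne'] at h2
    have := mul_le_mul_of_nonneg_left h2 hc.le
    rw [← mul_assoc, mul_inv_cancel₀ hc.ne', one_mul] at this
    linarith
  -- subadditivity
  have qsplit : ∀ (Y Z : V) (r : ℝ), 0 < r → q (Y + Z) r ≤ q Y (2*r) + q Z (2*r) := by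
    intro Y Z r hr
    have h1 := hconv ((2*r) • Y) ((2*r) • Z) (1/2) (by norm_num)
    have h2 : (1/2 : ℝ) • (2*r) • Y + (1 - 1/2 : ℝ) • (2*r) • Z = r • (Y + Z) := by
      norm_num [smul_smul, smul_add]; module
    rw [h2] at h1
    simp only [hqdef]
    rw [← add_div, div_le_div_iff₀ hr (by positivity : (0:ℝ) < 2*r)]
    nlinarith
  have N_add : ∀ Y Z : V, N (Y + Z) ≤ N Y + N Z := by
    intro Y Z
    refine le_of_forall_pos_le_add ?_
    intro ε hε
    obtain ⟨u, hu⟩ := exists_lt_of_ciInf_lt (show N Y < N Y + ε/2 by linarith)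
    obtain ⟨v, hv⟩ := exists_lt_of_ciInf_lt (show N Z < N Z + ε/2 by linarith)
    set t : ℝ := min (u:ℝ) (v:ℝ) with htdef
    have ht : 0 < t := lt_min u.2 v.2
    have hchain : N (Y + Z) ≤ q Y t + q Z t := by
      have := qsplit Y Z (t/2) (by positivity)
      rw [mul_div_cancel₀ _ (two_ne_zero)] at this
      exact le_trans (hNle (Y + Z) (t/2) (by positivity)) this
    have h1 : q Y t ≤ q Y u := qmono Y t u ht (min_le_left _ _)
    have h2 : q Z t ≤ q Z v := qmono Z t v ht (min_le_right _ _)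
    linarith
  have hf : ∀ x : ((⊥ : V →ₗ.[ℝ] ℝ)).domain, (⊥ : V →ₗ.[ℝ] ℝ) x ≤ N x := by
    rintro ⟨x, hx⟩
    rcases Submodule.mem_bot ℝ |>.mp hx with rfl
    have h0 : (0:ℝ) ≤ N 0 := by
      refine hleN 0 0 fun t ht => ?_
      have := qlb 0 t ht
      simpa [hφ0] using this
    exact ((⊥ : V →ₗ.[ℝ] ℝ).toFun.map_zero).trans_le h0
  obtain ⟨g, -, hg⟩ := exists_extension_of_le_sublinear (⊥ : V →ₗ.[ℝ] ℝ) N N_hom N_add hf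
  refine ⟨g, fun Z => ?_⟩
  have := (hg Z).trans (hNle Z 1 one_pos)
  rwa [hq1] at this

variable {Ω : Type*} [MeasurableSpace Ω] in
private lemma transE (M : Submodule ℝ (Ω → ℝ)) (hM : ∀ X ∈ M, IsLinfty X)
    (hone : (fun _ : Ω => (1:ℝ)) ∈ M)
    (E : (Ω → ℝ) → ℝ)
    (hmono : ∀ X ∈ M, ∀ Y ∈ M, (∀ ω, X ω ≤ Y ω) → E X ≤ E Y)
    (hcp : ∀ c : ℝ, E (fun _ : Ω => c) = c)
    (hconvex : ∀ X ∈ M, ∀ Y ∈ M, ∀ t ∈ Icc (0:ℝ) 1,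
      E (fun ω => t * X ω + (1 - t) * Y ω) ≤ t * E X + (1 - t) * E Y)
    (Z : Ω → ℝ) (hZ : Z ∈ M) (c : ℝ) (hc : 0 ≤ c) :
    E (fun ω => Z ω + c) ≤ E Z + c := by
  obtain ⟨-, C, hC⟩ := hM Z hZ
  set s : ℝ := ⨆ ω, |Z ω| with hs
  have hbdd : BddAbove (Set.range fun ω => |Z ω|) := ⟨C, by rintro x ⟨ω, rfl⟩; exact hC ω⟩
  have hZb : ∀ ω, Z ω ≤ s := fun ω => (le_abs_self _).trans (le_ciSup hbdd ω)
  refine aux_limit _ _ (s - E Z) ?_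
  intro t ht ht1
  set K : ℝ := s + c / t with hK
  have hmemc : ∀ r : ℝ, (fun _ : Ω => r) ∈ M := by
    intro r
    have h := M.smul_mem r hone
    have e : (r • fun _ : Ω => (1:ℝ)) = fun _ : Ω => r := by funext ω; simp
    rwa [e] at h
  have hmem1 : (fun ω => Z ω + c) ∈ M := M.add_mem hZ (hmemc c)
  have hmem2 : (fun ω => t * K + (1 - t) * Z ω) ∈ M :=
    M.add_mem (hmemc (t * K)) (M.smul_mem (1 - t) hZ)
  have hm : E (fun ω => Z ω + c) ≤ E (fun ω => t * K + (1 - t) * Z ω) := by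
    refine hmono _ hmem1 _ hmem2 fun ω => ?_
    have h1 : t * K = t * s + c := by
      rw [hK, mul_add, mul_div_cancel₀ _ ht.ne']
    have := hZb ω
    nlinarith
  have hcv := hconvex (fun _ : Ω => K) (hmemc K) Z hZ t ⟨ht.le, ht1⟩
  rw [hcp K] at hcv
  have hKc : t * K = t * s + c := by rw [hK, mul_add, mul_div_cancel₀ _ ht.ne']
  linarith [hm, hcv]


variable {Ω : Type*} [MeasurableSpace Ω] in
private theorem stmt5' (M : Submodule ℝ (Ω → ℝ)) (hM : ∀ X ∈ M, IsLinfty X)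
    (hone : (fun _ : Ω => (1:ℝ)) ∈ M)
    (E : (Ω → ℝ) → ℝ)
    (hmono : ∀ X ∈ M, ∀ Y ∈ M, (∀ ω, X ω ≤ Y ω) → E X ≤ E Y)
    (hcp : ∀ c : ℝ, E (fun _ : Ω => c) = c)
    (hconvex : ∀ X ∈ M, ∀ Y ∈ M, ∀ t ∈ Icc (0:ℝ) 1,
      E (fun ω => t * X ω + (1 - t) * Y ω) ≤ t * E X + (1 - t) * E Y) :
    ∀ X : M, ∀ α : ℝ, (⨆ ω, |(X : Ω → ℝ) ω|) - E (X : Ω → ℝ) ≤ α →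
      Convex ℝ {μ : M →ₗ[ℝ] ℝ | (⨆ Y : M, ((μ Y - E (Y : Ω → ℝ) : ℝ) : EReal)) ≤ (α : EReal)} ∧
      (∃ μ : M →ₗ[ℝ] ℝ, (∃ C : ℝ, ∀ Z : M, |μ Z| ≤ C * ⨆ ω, |(Z : Ω → ℝ) ω|) ∧
        (⨆ Y : M, ((μ Y - E (Y : Ω → ℝ) : ℝ) : EReal)) ≤ (α : EReal) ∧
        ((E (X : Ω → ℝ) : ℝ) : EReal) = ((μ X : ℝ) : EReal) - ⨆ Y : M, ((μ Y - E (Y : Ω → ℝ) : ℝ) : EReal)) ∧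
      (∀ ν : M →ₗ[ℝ] ℝ, (∃ C : ℝ, ∀ Z : M, |ν Z| ≤ C * ⨆ ω, |(Z : Ω → ℝ) ω|) →
        ((ν X : ℝ) : EReal) - (⨆ Y : M, ((ν Y - E (Y : Ω → ℝ) : ℝ) : EReal)) ≤ ((E (X : Ω → ℝ) : ℝ) : EReal)) := by
  intro X α hα
  -- basic sup facts
  have hbdd : ∀ Z : M, BddAbove (Set.range fun ω => |(Z : Ω → ℝ) ω|) := by
    intro Z
    obtain ⟨-, C, hC⟩ := hM Z Z.2
    exact ⟨C, by rintro x ⟨ω, rfl⟩; exact hC ω⟩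
  have hptle : ∀ (Z : M) (ω : Ω), (Z : Ω → ℝ) ω ≤ ⨆ ω, |(Z : Ω → ℝ) ω| :=
    fun Z ω => (le_abs_self _).trans (le_ciSup (hbdd Z) ω)
  have hsup0 : ∀ Z : M, 0 ≤ ⨆ ω, |(Z : Ω → ℝ) ω| :=
    fun Z => Real.iSup_nonneg fun ω => abs_nonneg _
  -- the convex function φ
  set φ : M → ℝ := fun Z => E ((X : Ω → ℝ) + (Z : Ω → ℝ)) - E (X : Ω → ℝ) with hφdef
  have hφ0 : φ 0 = 0 := by simp [hφdef]
  have hφconv : ∀ Z W : M, ∀ t ∈ Icc (0:ℝ) 1, φ (t • Z + (1-t) • W) ≤ t * φ Z + (1-t) * φ W := by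
    intro Z W t ht
    have h1 := hconvex ((X : Ω → ℝ) + Z) (M.add_mem X.2 Z.2) ((X : Ω → ℝ) + W)
      (M.add_mem X.2 W.2) t ht
    have he : (fun ω => t * ((X : Ω → ℝ) + (Z : Ω → ℝ)) ω + (1 - t) * ((X : Ω → ℝ) + (W : Ω → ℝ)) ω)
        = (X : Ω → ℝ) + ((t • Z + (1-t) • W : M) : Ω → ℝ) := by
      funext ω
      simp only [Pi.add_apply, Submodule.coe_add, SetLike.val_smul, Pi.smul_apply, smul_eq_mul]
      ring
    rw [he] at h1
    simp only [hφdef]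
    linarith
  obtain ⟨g, hg⟩ := exists_subgrad φ hφ0 hφconv
  -- hg : ∀ Z, g Z ≤ E (X + Z) - E X
  have hgsub : ∀ Y : M, g Y - E (Y : Ω → ℝ) ≤ g X - E (X : Ω → ℝ) := by
    intro Y
    have h1 := hg (Y - X)
    rw [map_sub] at h1
    have he : (X : Ω → ℝ) + ((Y - X : M) : Ω → ℝ) = (Y : Ω → ℝ) := by
      simp
    simp only [hφdef] at h1
    rw [he] at h1
    linarith
  have hgneg : ∀ W : M, (∀ ω, (W : Ω → ℝ) ω ≤ 0) → g W ≤ 0 := by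
    intro W hW
    have h1 := hg W
    have h2 : E ((X : Ω → ℝ) + (W : Ω → ℝ)) ≤ E (X : Ω → ℝ) := by
      refine hmono _ (M.add_mem X.2 W.2) _ X.2 fun ω => ?_
      have := hW ω
      simp only [Pi.add_apply]
      linarith
    simp only [hφdef] at h1
    linarith
  set onef : M := ⟨fun _ => (1:ℝ), hone⟩ with honef
  have hone1 : g onef ≤ 1 := by
    have h1 := hg onef
    have h2 := transE M hM hone E hmono hcp hconvex (X : Ω → ℝ) X.2 1 one_pos.le
    have he : (X : Ω → ℝ) + (onef : Ω → ℝ) = fun ω => (X : Ω → ℝ) ω + 1 := by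
      funext ω; simp [honef]
    simp only [hφdef] at h1
    rw [he] at h1
    linarith
  have hone0 : 0 ≤ g onef := by
    have := hgneg (-onef) (fun ω => by simp [honef])
    rw [map_neg] at this
    linarith
  have hgle : ∀ Z : M, g Z ≤ ⨆ ω, |(Z : Ω → ℝ) ω| := by
    intro Z
    set s : ℝ := ⨆ ω, |(Z : Ω → ℝ) ω| with hs
    have h1 : g (Z - s • onef) ≤ 0 := by
      refine hgneg _ fun ω => ?_
      simp only [Submodule.coe_sub, SetLike.val_smul, Pi.sub_apply, Pi.smul_apply,
        smul_eq_mul, honef]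
      nlinarith [hptle Z ω]
    rw [map_sub, map_smul, smul_eq_mul] at h1
    nlinarith [hsup0 Z, hone1, hone0]
  have hgabs : ∀ Z : M, |g Z| ≤ 1 * ⨆ ω, |(Z : Ω → ℝ) ω| := by
    intro Z
    rw [one_mul, abs_le]
    constructor
    · have h1 := hgle (-Z)
      rw [map_neg] at h1
      have he : (⨆ ω, |((-Z : M) : Ω → ℝ) ω|) = ⨆ ω, |(Z : Ω → ℝ) ω| := by
        congr 1; funext ω; simp
      rw [he] at h1
      linarith
    · exact hgle Z
  -- the conjugate of g
  have hconj : (⨆ Y : M, ((g Y - E (Y : Ω → ℝ) : ℝ) : EReal))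
      = ((g X - E (X : Ω → ℝ) : ℝ) : EReal) := by
    apply le_antisymm
    · exact iSup_le fun Y => EReal.coe_le_coe_iff.mpr (hgsub Y)
    · exact le_iSup (fun Y : M => ((g Y - E (Y : Ω → ℝ) : ℝ) : EReal)) X
  refine ⟨?_, ⟨g, ⟨1, hgabs⟩, ?_, ?_⟩, ?_⟩
  · -- convexity
    intro μ hμ ν hν a b ha hb hab
    simp only [mem_setOf_eq] at hμ hν ⊢
    refine iSup_le fun Y => ?_
    have h1 : (μ Y - E (Y : Ω → ℝ) : ℝ) ≤ α := by
      have := le_trans (le_iSup (fun Y : M => ((μ Y - E (Y : Ω → ℝ) : ℝ) : EReal)) Y) hμ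
      exact_mod_cast this
    have h2 : (ν Y - E (Y : Ω → ℝ) : ℝ) ≤ α := by
      have := le_trans (le_iSup (fun Y : M => ((ν Y - E (Y : Ω → ℝ) : ℝ) : EReal)) Y) hν
      exact_mod_cast this
    have h3 : ((a • μ + b • ν) Y - E (Y : Ω → ℝ) : ℝ) ≤ α := by
      simp only [LinearMap.add_apply, LinearMap.smul_apply, smul_eq_mul]
      have e1 : a * (μ Y - E (Y : Ω → ℝ)) ≤ a * α := mul_le_mul_of_nonneg_left h1 ha
      have e2 : b * (ν Y - E (Y : Ω → ℝ)) ≤ b * α := mul_le_mul_of_nonneg_left h2 hb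
      have e3 : (a + b) * E (Y : Ω → ℝ) = E (Y : Ω → ℝ) := by rw [hab, one_mul]
      have e4 : (a + b) * α = α := by rw [hab, one_mul]
      nlinarith [e1, e2, e3, e4]
    exact_mod_cast h3
  · -- conj ≤ α
    rw [hconj]
    have := hgle X
    exact_mod_cast (by linarith : g X - E (X : Ω → ℝ) ≤ α)
  · -- attainment
    rw [hconj, ← EReal.coe_sub]
    norm_num
  · -- max
    intro ν hν
    have h1 : ((ν X - E (X : Ω → ℝ) : ℝ) : EReal)
        ≤ ⨆ Y : M, ((ν Y - E (Y : Ω → ℝ) : ℝ) : EReal) :=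
      le_iSup (fun Y : M => ((ν Y - E (Y : Ω → ℝ) : ℝ) : EReal)) X
    set cν : EReal := ⨆ Y : M, ((ν Y - E (Y : Ω → ℝ) : ℝ) : EReal) with hcν
    by_cases htop : cν = ⊤
    · rw [htop, EReal.sub_top]
      exact bot_le
    · have hbot : cν ≠ ⊥ := fun h => by rw [h] at h1; exact (EReal.coe_ne_bot _) (le_bot_iff.mp h1)
      have hR : ((cν.toReal : ℝ) : EReal) = cν := EReal.coe_toReal htop hbot
      rw [← hR] at h1 ⊢
      have h1' : ν X - E (X : Ω → ℝ) ≤ cν.toReal := EReal.coe_le_coe_iff.mp h1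
      rw [← EReal.coe_sub, EReal.coe_le_coe_iff]
      linarith

theorem stmt5 {Ω : Type*} [MeasurableSpace Ω]
    (M : Submodule ℝ (Ω → ℝ)) (hM : ∀ X ∈ M, IsLinfty X)
    (hone : (fun _ : Ω => (1:ℝ)) ∈ M)
    (E : (Ω → ℝ) → ℝ)
    (hmono : ∀ X ∈ M, ∀ Y ∈ M, (∀ ω, X ω ≤ Y ω) → E X ≤ E Y)
    (hcp : ∀ c : ℝ, E (fun _ : Ω => c) = c)
    (hconvex : ∀ X ∈ M, ∀ Y ∈ M, ∀ t ∈ Icc (0:ℝ) 1,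
      E (fun ω => t * X ω + (1 - t) * Y ω) ≤ t * E X + (1 - t) * E Y) :
    ∀ X : M, ∀ α : ℝ, (⨆ ω, |(X : Ω → ℝ) ω|) - E (X : Ω → ℝ) ≤ α →
      -- the set `{μ ∈ M' : E*(μ) ≤ α}` is convex ...
      Convex ℝ {μ : M →ₗ[ℝ] ℝ | conjE M E μ ≤ (α : EReal)} ∧
      -- ... and the maximum is attained on it
      (∃ μ : M →ₗ[ℝ] ℝ, IsBddFunctional M μ ∧ conjE M E μ ≤ (α : EReal) ∧
        ((E (X : Ω → ℝ) : ℝ) : EReal) = ((μ X : ℝ) : EReal) - conjE M E μ) ∧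
      -- and `E(X) = max_{μ ∈ M'} (μX − E*(μ))`
      (∀ ν : M →ₗ[ℝ] ℝ, IsBddFunctional M ν →
        ((ν X : ℝ) : EReal) - conjE M E ν ≤ ((E (X : Ω → ℝ) : ℝ) : EReal)) := by
  intro X α h
  exact stmt5' M hM hone E hmono hcp hconvex X α h
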